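/- Let Σ ∈ R^{p×p} be the covariance of a mean-zero square-integrable random vector X, U ⊂ [p], i ∉ U, and β = Σ_{•i} − Σ_{•U} Σ_U⁺ Σ_{U,i}. Then Tr(Σ − Σ_{•,U∪{i}} Σ_{U∪{i}}⁺ Σ_{U∪{i},•}) = Tr(Σ − Σ_{•U} Σ_U⁺ Σ_{U•}) − (‖β‖₂²/β_i)·1{β_i > 0}. -/

import Mathlib

open MeasureTheory Matrix

/-- Moore–Penrose pseudoinverse of a real matrix, characterized by the four
Penrose equations (which have a unique solution over ℝ). -/
noncomputable def mpinv {m n : Type*} [Fintype m] [Fintype n] (A : Matrix m n ℝ) :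
    Matrix n m ℝ := by
  classical
  exact if h : ∃ B : Matrix n m ℝ,
      A * B * A = A ∧ B * A * B = B ∧ (A * B)ᵀ = A * B ∧ (B * A)ᵀ = B * A
    then h.choose else 0

/-- The matrix of cross second moments `E[Y Xᵀ]`. -/
noncomputable def crossMoment {Ω : Type*} [MeasurableSpace Ω] (μ : Measure Ω)
    {α β : Type*} (Y : Ω → α → ℝ) (X : Ω → β → ℝ) : Matrix α β ℝ :=
  Matrix.of fun i j => ∫ ω, Y ω i * X ω j ∂μ

def IsMP {m n : Type*} [Fintype m] [Fintype n] (A : Matrix m n ℝ) (B : Matrix n m ℝ) : Prop :=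
  A * B * A = A ∧ B * A * B = B ∧ (A * B)ᵀ = A * B ∧ (B * A)ᵀ = B * A

lemma isMP_unique {m n : Type*} [Fintype m] [Fintype n] {A : Matrix m n ℝ}
    {B C : Matrix n m ℝ} (hB : IsMP A B) (hC : IsMP A C) : B = C := by
  obtain ⟨hB1, hB2, hB3, hB4⟩ := hB
  obtain ⟨hC1, hC2, hC3, hC4⟩ := hC
  have hAB : A * B = A * C := by
    have h1 : A * B = (A * C) * (A * B) := by
      conv_lhs => rw [← hC1]
      simp only [Matrix.mul_assoc]
    calc A * B = (A * C) * (A * B) := h1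
      _ = (A * C)ᵀ * (A * B)ᵀ := by rw [hC3, hB3]
      _ = ((A * B) * (A * C))ᵀ := (Matrix.transpose_mul _ _).symm
      _ = (A * C)ᵀ := by
            have : (A * B) * (A * C) = A * C := by
              simp only [← Matrix.mul_assoc]; rw [hB1]
            rw [this]
      _ = A * C := hC3
  have hBA : B * A = C * A := by
    have h1 : B * A = (B * A) * (C * A) := by
      conv_lhs => rw [← hC1]
      simp only [Matrix.mul_assoc]
    calc B * A = (B * A) * (C * A) := h1
      _ = (B * A)ᵀ * (C * A)ᵀ := by rw [hC4, hB4]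
      _ = ((C * A) * (B * A))ᵀ := (Matrix.transpose_mul _ _).symm
      _ = (C * A)ᵀ := by
            have : (C * A) * (B * A) = C * A := by
              simp only [← Matrix.mul_assoc]
              rw [Matrix.mul_assoc C A B, Matrix.mul_assoc C (A*B) A, hB1]
            rw [this]
      _ = C * A := hC4
  calc B = B * A * B := hB2.symm
    _ = B * (A * C) := by rw [Matrix.mul_assoc, hAB]
    _ = (C * A) * C := by rw [← Matrix.mul_assoc, hBA]
    _ = C := by rw [Matrix.mul_assoc, ← Matrix.mul_assoc]; exact hC2

lemma mpinv_eq {m n : Type*} [Fintype m] [Fintype n] {A : Matrix m n ℝ}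
    {B : Matrix n m ℝ} (hB : IsMP A B) : mpinv A = B := by
  have hex : ∃ B : Matrix n m ℝ,
      A * B * A = A ∧ B * A * B = B ∧ (A * B)ᵀ = A * B ∧ (B * A)ᵀ = B * A := ⟨B, hB⟩
  unfold mpinv
  rw [dif_pos hex]
  exact isMP_unique hex.choose_spec hB

lemma isHermitian_exists_mp {n : Type*} [Fintype n] [DecidableEq n]
    {M : Matrix n n ℝ} (hM : M.IsHermitian) : ∃ B, IsMP M B ∧ Bᵀ = B := by
  set V : Matrix n n ℝ := (hM.eigenvectorUnitary : Matrix n n ℝ) with hV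
  set d : n → ℝ := hM.eigenvalues with hd
  have hVV' : Vᵀ * V = 1 := by
    have := (Matrix.mem_unitaryGroup_iff').mp (hM.eigenvectorUnitary).2
    simpa [Matrix.star_eq_conjTranspose, Matrix.conjTranspose_eq_transpose_of_trivial] using this
  have hspec : M = V * diagonal d * Vᵀ := by
    have := hM.spectral_theorem
    simpa [Matrix.star_eq_conjTranspose, Matrix.conjTranspose_eq_transpose_of_trivial,
      RCLike.ofReal_real_eq_id] using this
  have key : ∀ e f : n → ℝ, (V * diagonal e * Vᵀ) * (V * diagonal f * Vᵀ)
      = V * diagonal (fun j => e j * f j) * Vᵀ := by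
    intro e f
    calc (V * diagonal e * Vᵀ) * (V * diagonal f * Vᵀ)
        = V * diagonal e * (Vᵀ * V) * (diagonal f * Vᵀ) := by
          simp only [Matrix.mul_assoc]
      _ = V * (diagonal e * diagonal f) * Vᵀ := by
          rw [hVV', Matrix.mul_one]; simp only [Matrix.mul_assoc]
      _ = V * diagonal (fun j => e j * f j) * Vᵀ := by rw [diagonal_mul_diagonal]
  have keyT : ∀ e : n → ℝ, (V * diagonal e * Vᵀ)ᵀ = V * diagonal e * Vᵀ := by
    intro e
    rw [Matrix.transpose_mul, Matrix.transpose_mul, Matrix.transpose_transpose,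
      Matrix.diagonal_transpose, Matrix.mul_assoc]
  refine ⟨V * diagonal (fun j => (d j)⁻¹) * Vᵀ, ⟨?_, ?_, ?_, ?_⟩, keyT _⟩
  · rw [hspec, key, key]
    have : (fun j => d j * (d j)⁻¹ * d j) = d := by
      funext j
      rcases eq_or_ne (d j) 0 with h | h
      · simp [h]
      · field_simp
    rw [this]
  · rw [hspec, key, key]
    have : (fun j => (d j)⁻¹ * d j * (d j)⁻¹) = fun j => (d j)⁻¹ := by
      funext j
      rcases eq_or_ne (d j) 0 with h | h
      · simp [h]
      · field_simp
    rw [this]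
  · rw [hspec, key, keyT]
  · rw [hspec, key, keyT]

lemma isHermitian_of_transpose {n : Type*} {M : Matrix n n ℝ} (h : Mᵀ = M) :
    M.IsHermitian := by
  rwa [Matrix.IsHermitian, Matrix.conjTranspose_eq_transpose_of_trivial]

/-- Properties of the projection `P = C (CᵀC)⁺ Cᵀ`. -/
lemma proj_spec {m ι : Type*} [Fintype m] [Fintype ι] [DecidableEq ι]
    (C : Matrix m ι ℝ) (B : Matrix ι ι ℝ) (hBdef : B = mpinv (Cᵀ * C)) :
    (C * B * Cᵀ)ᵀ = C * B * Cᵀ ∧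
    (C * B * Cᵀ) * (C * B * Cᵀ) = C * B * Cᵀ ∧
    (C * B * Cᵀ) * C = C ∧
    ∃ X : Matrix ι m ℝ, C * B * Cᵀ = C * X := by
  set M : Matrix ι ι ℝ := Cᵀ * C with hMdef
  have hMH : M.IsHermitian := by
    apply isHermitian_of_transpose
    rw [hMdef, Matrix.transpose_mul, Matrix.transpose_transpose]
  obtain ⟨B₀, hB₀, hB₀T⟩ := isHermitian_exists_mp hMH
  have hBB₀ : B = B₀ := by rw [hBdef, mpinv_eq hB₀]
  subst hBB₀
  obtain ⟨h1, h2, h3, h4⟩ := hB₀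
  have hkey : C * B * M = C := by
    have hMS : M * (B * M) = M := by rw [← Matrix.mul_assoc]; exact h1
    have hE : (C * B * M - C)ᵀ * (C * B * M - C) = 0 := by
      have hform : C * B * M - C = C * (B * M - 1) := by
        rw [Matrix.mul_sub, Matrix.mul_one, Matrix.mul_assoc]
      rw [hform, Matrix.transpose_mul]
      have hSsub : (B * M - 1)ᵀ = B * M - 1 := by
        rw [Matrix.transpose_sub, Matrix.transpose_one, h4]
      rw [hSsub]
      calc (B * M - 1) * Cᵀ * (C * (B * M - 1))
          = (B * M - 1) * (M * (B * M - 1)) := by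
            rw [hMdef]; simp only [Matrix.mul_assoc]
        _ = (B * M - 1) * (M * (B * M) - M) := by rw [Matrix.mul_sub, Matrix.mul_one]
        _ = 0 := by rw [hMS, sub_self, Matrix.mul_zero]
    have h0 : C * B * M - C = 0 := by
      have := Matrix.conjTranspose_mul_self_eq_zero (A := C * B * M - C)
      rw [Matrix.conjTranspose_eq_transpose_of_trivial] at this
      exact this.mp hE
    exact sub_eq_zero.mp h0
  refine ⟨?_, ?_, ?_, ⟨B * Cᵀ, by rw [Matrix.mul_assoc]⟩⟩
  · rw [Matrix.transpose_mul, Matrix.transpose_mul, Matrix.transpose_transpose, hB₀T,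
      ← Matrix.mul_assoc]
  · calc (C * B * Cᵀ) * (C * B * Cᵀ)
        = C * B * (Cᵀ * C) * (B * Cᵀ) := by simp only [Matrix.mul_assoc]
      _ = (C * (B * M * B)) * Cᵀ := by rw [← hMdef]; simp only [Matrix.mul_assoc]
      _ = C * B * Cᵀ := by rw [h2, Matrix.mul_assoc]
  · calc (C * B * Cᵀ) * C = C * B * (Cᵀ * C) := by simp only [Matrix.mul_assoc]
      _ = C := by rw [← hMdef]; exact hkey

lemma proj_unique {m ι : Type*} [Fintype m] [Fintype ι]
    {C : Matrix m ι ℝ} {P P' : Matrix m m ℝ}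
    (hPT : Pᵀ = P) (hPC : P * C = C) (hPX : ∃ X : Matrix ι m ℝ, P = C * X)
    (hP'T : P'ᵀ = P') (hP'C : P' * C = C) (hP'X : ∃ X : Matrix ι m ℝ, P' = C * X) : P = P' := by
  obtain ⟨X, hX⟩ := hPX
  obtain ⟨Y, hY⟩ := hP'X
  have h1 : P * P' = P' := by rw [hY, ← Matrix.mul_assoc, hPC]
  have h2 : P' * P = P := by rw [hX, ← Matrix.mul_assoc, hP'C]
  calc P = Pᵀ := hPT.symm
    _ = (P' * P)ᵀ := by rw [h2]
    _ = Pᵀ * P'ᵀ := Matrix.transpose_mul _ _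
    _ = P * P' := by rw [hPT, hP'T]
    _ = P' := h1

lemma mul_vecMulVec {m n o : Type*} [Fintype n] (M : Matrix m n ℝ) (u : n → ℝ) (v : o → ℝ) :
    M * vecMulVec u v = vecMulVec (M *ᵥ u) v := by
  ext j k
  simp [Matrix.mul_apply, vecMulVec_apply, Matrix.mulVec, dotProduct,
    Finset.sum_mul, mul_assoc]

lemma vecMulVec_mul {m n o : Type*} [Fintype n] (u : m → ℝ) (v : n → ℝ) (M : Matrix n o ℝ) :
    vecMulVec u v * M = vecMulVec u (Mᵀ *ᵥ v) := by
  ext j k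
  simp only [Matrix.mul_apply, vecMulVec_apply, Matrix.mulVec, dotProduct,
    Matrix.transpose_apply, Finset.mul_sum]
  exact Finset.sum_congr rfl fun x _ => by ring

lemma vecMulVec_mulVec {m n : Type*} [Fintype n] (u : m → ℝ) (v w : n → ℝ) :
    vecMulVec u v *ᵥ w = (v ⬝ᵥ w) • u := by
  funext k
  simp only [Matrix.mulVec, vecMulVec_apply, dotProduct, Pi.smul_apply, smul_eq_mul]
  simp_rw [mul_assoc]
  rw [← Finset.mul_sum]
  exact mul_comm _ _

lemma trace_vecMulVec {n : Type*} [Fintype n] (u v : n → ℝ) :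
    Matrix.trace (vecMulVec u v) = u ⬝ᵥ v := by
  simp [Matrix.trace, vecMulVec_apply, Matrix.diag, dotProduct]

lemma mulVec_dotProduct_eq {m n : Type*} [Fintype m] [Fintype n]
    (M : Matrix m n ℝ) (u : n → ℝ) (w : m → ℝ) :
    (M *ᵥ u) ⬝ᵥ w = u ⬝ᵥ (Mᵀ *ᵥ w) := by
  rw [dotProduct_comm, dotProduct_mulVec, ← Matrix.mulVec_transpose,
    dotProduct_comm]

lemma memℒ2_integrable_mul {Ω : Type*} [MeasurableSpace Ω] {μ : Measure Ω}
    {f g : Ω → ℝ} (hf : MemLp f 2 μ) (hg : MemLp g 2 μ) :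
    Integrable (fun ω => f ω * g ω) μ := by
  have h1 := (hf.add hg).integrable_sq
  have h2 := hf.integrable_sq
  have h3 := hg.integrable_sq
  have heq : (fun ω => f ω * g ω)
      = fun ω => (((fun ω => f ω + g ω) ω) ^ 2 - f ω ^ 2 - g ω ^ 2) / 2 := by
    funext ω; ring
  rw [heq]
  exact ((h1.sub h2).sub h3).div_const 2

lemma crossMoment_posSemidef {Ω : Type*} [MeasurableSpace Ω] (μ : Measure Ω)
    [IsProbabilityMeasure μ] {p : ℕ} (X : Ω → Fin p → ℝ)
    (hX : ∀ i, MemLp (fun ω => X ω i) 2 μ) :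
    (crossMoment μ X X).PosSemidef := by
  have hint : ∀ j k : Fin p, Integrable (fun ω => X ω j * X ω k) μ :=
    fun j k => memℒ2_integrable_mul (hX j) (hX k)
  refine Matrix.PosSemidef.of_dotProduct_mulVec_nonneg ?_ ?_
  · rw [Matrix.IsHermitian, Matrix.conjTranspose_eq_transpose_of_trivial]
    ext j k
    simp only [crossMoment, Matrix.transpose_apply, Matrix.of_apply]
    simp_rw [mul_comm]
  · intro x
    have hsx : star x = x := by funext j; simp
    rw [hsx]
    have hcalc : x ⬝ᵥ (crossMoment μ X X) *ᵥ x
        = ∫ ω, (∑ j, x j * X ω j) ^ 2 ∂μ := by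
      have hsq : ∀ ω : Ω, (∑ j, x j * X ω j) ^ 2
          = ∑ j, ∑ k, x j * x k * (X ω j * X ω k) := by
        intro ω
        rw [sq, Finset.sum_mul_sum]
        exact Finset.sum_congr rfl fun j _ => Finset.sum_congr rfl fun k _ => by ring
      simp_rw [hsq]
      rw [integral_finset_sum]
      · simp_rw [integral_finset_sum _ (fun k _ => ((hint _ k).const_mul _)),
          integral_const_mul]
        simp only [dotProduct, Matrix.mulVec, crossMoment, Matrix.of_apply,
          dotProduct]
        rw [Finset.sum_congr rfl]
        intro j _
        rw [Finset.mul_sum]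
        exact Finset.sum_congr rfl fun k _ => by ring
      · exact fun j _ => integrable_finset_sum _ (fun k _ => ((hint j k).const_mul _))
    rw [hcalc]
    exact integral_nonneg fun ω => sq_nonneg _

/-- **Trace residual update.** For the covariance `Σ` of a mean-zero
square-integrable random vector, `U ⊂ [p]`, `i ∉ U`, and
`β = Σ_{•i} − Σ_{•U} Σ_U⁺ Σ_{U,i}`, one has
`Tr(Σ − Σ_{•,U∪{i}} Σ_{U∪{i}}⁺ Σ_{U∪{i},•}) = Tr(Σ − Σ_{•U} Σ_U⁺ Σ_{U•}) −
(‖β‖₂²/β_i)·1{β_i > 0}`. -/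
theorem trace_residual_update {Ω : Type*} [MeasurableSpace Ω] (μ : Measure Ω)
    [IsProbabilityMeasure μ] {p : ℕ}
    (X : Ω → Fin p → ℝ) (hX : ∀ i, MemLp (fun ω => X ω i) 2 μ)
    (hmean : ∀ i, ∫ ω, X ω i ∂μ = 0)
    (Sig : Matrix (Fin p) (Fin p) ℝ) (hSig : Sig = crossMoment μ X X)
    (U : Finset (Fin p)) (i : Fin p) (hi : i ∉ U)
    (resid : Finset (Fin p) → Matrix (Fin p) (Fin p) ℝ)
    (hresid : ∀ V : Finset (Fin p),
      resid V = Sig - Sig.submatrix id (fun j : ↥V => (j : Fin p)) *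
        mpinv (Sig.submatrix (fun j : ↥V => (j : Fin p)) (fun j : ↥V => (j : Fin p))) *
        Sig.submatrix (fun j : ↥V => (j : Fin p)) id)
    (β : Fin p → ℝ) (hβ : β = fun j => resid U j i) :
    Matrix.trace (resid (insert i U)) =
      Matrix.trace (resid U) -
        (if 0 < β i then (∑ j, β j ^ 2) / β i else 0) := by
  classical
  have hPSD : Sig.PosSemidef := by rw [hSig]; exact crossMoment_posSemidef μ X hX
  obtain ⟨A, hAT, hAA⟩ : ∃ A : Matrix (Fin p) (Fin p) ℝ, Aᵀ = A ∧ A * A = Sig := by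
    open scoped MatrixOrder in
    obtain ⟨S, hS, -, hSS⟩ :=
      CFC.exists_sqrt_of_isSelfAdjoint_of_quasispectrumRestricts hPSD.isHermitian
        (QuasispectrumRestricts.nnreal_of_nonneg hPSD.nonneg)
    refine ⟨S, ?_, hSS⟩
    have := hS.star_eq
    rwa [Matrix.star_eq_conjTranspose, Matrix.conjTranspose_eq_transpose_of_trivial] at this
  obtain ⟨Cm, hCm⟩ : ∃ Cm : ∀ V : Finset (Fin p), Matrix (Fin p) {x // x ∈ V} ℝ,
      Cm = fun V : Finset (Fin p) => A.submatrix id (fun j : ↥V => (j : Fin p)) := ⟨_, rfl⟩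
  obtain ⟨Pm, hPm⟩ : ∃ Pm : Finset (Fin p) → Matrix (Fin p) (Fin p) ℝ,
      Pm = fun V => Cm V * mpinv ((Cm V)ᵀ * Cm V) * (Cm V)ᵀ := ⟨_, rfl⟩
  have hCmT : ∀ V : Finset (Fin p), (Cm V)ᵀ = A.submatrix (fun j : ↥V => (j : Fin p)) id := by
    intro V
    rw [hCm, Matrix.transpose_submatrix, hAT]
  have hsub : ∀ V : Finset (Fin p), resid V = Sig - A * Pm V * A := by
    intro V
    rw [hresid V]
    have h1 : Sig.submatrix id (fun j : ↥V => (j : Fin p)) = A * Cm V := by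
      rw [← hAA, Matrix.submatrix_mul A A id id _ Function.bijective_id,
        Matrix.submatrix_id_id, hCm]
    have h2 : Sig.submatrix (fun j : ↥V => (j : Fin p)) id = (Cm V)ᵀ * A := by
      rw [← hAA, Matrix.submatrix_mul A A _ id id Function.bijective_id,
        Matrix.submatrix_id_id, hCmT]
    have h3 : Sig.submatrix (fun j : ↥V => (j : Fin p)) (fun j : ↥V => (j : Fin p))
        = (Cm V)ᵀ * Cm V := by
      rw [← hAA, Matrix.submatrix_mul A A _ id _ Function.bijective_id, hCmT, hCm]
    rw [h1, h2, h3, hPm]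
    congr 1
    simp only [Matrix.mul_assoc]
  have hproj : ∀ V : Finset (Fin p), (Pm V)ᵀ = Pm V ∧ Pm V * Pm V = Pm V ∧
      Pm V * Cm V = Cm V ∧ ∃ X : Matrix ↥V (Fin p) ℝ, Pm V = Cm V * X := by
    intro V
    rw [hPm]
    exact proj_spec (Cm V) _ rfl
  have hcol : ∀ (V : Finset (Fin p)) (j : Fin p), j ∈ V →
      Pm V *ᵥ (fun k => A k j) = fun k => A k j := by
    intro V j hj
    have h := (hproj V).2.2.1
    funext k
    have h2 := congrFun (congrFun h k) ⟨j, hj⟩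
    simpa [hCm, Matrix.mul_apply, Matrix.submatrix_apply, Matrix.mulVec,
      dotProduct] using h2
  obtain ⟨U', hU'⟩ : ∃ U' : Finset (Fin p), U' = insert i U := ⟨_, rfl⟩
  obtain ⟨P, hP⟩ : ∃ P, P = Pm U := ⟨_, rfl⟩
  obtain ⟨δ, hδ⟩ : ∃ δ : Fin p → ℝ, δ = Pi.single i 1 := ⟨_, rfl⟩
  obtain ⟨a, ha⟩ : ∃ a : Fin p → ℝ, a = A *ᵥ δ := ⟨_, rfl⟩
  obtain ⟨r, hr⟩ : ∃ r : Fin p → ℝ, r = a - P *ᵥ a := ⟨_, rfl⟩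
  obtain ⟨c, hc⟩ : ∃ c : ℝ, c = r ⬝ᵥ r := ⟨_, rfl⟩
  have haf : a = fun k => A k i := by
    funext k; simp [ha, hδ, Matrix.mulVec_single]
  have hPT : Pᵀ = P := by rw [hP]; exact (hproj U).1
  have hPP : P * P = P := by rw [hP]; exact (hproj U).2.1
  have hPCeq : P * Cm U = Cm U := by rw [hP]; exact (hproj U).2.2.1
  obtain ⟨X₀, hX₀⟩ := (hproj U).2.2.2
  rw [← hP] at hX₀
  have hcolU : ∀ j ∈ U, P *ᵥ (fun k => A k j) = fun k => A k j := by
    intro j hj; rw [hP]; exact hcol U j hj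
  have hPr : P *ᵥ r = 0 := by
    rw [hr, Matrix.mulVec_sub, Matrix.mulVec_mulVec, hPP, sub_self]
  -- β = A *ᵥ r
  have hβv : β = A *ᵥ r := by
    have hres : resid U = A * A - A * P * A := by rw [hsub U, hAA, hP]
    funext j
    rw [hβ]
    show resid U j i = (A *ᵥ r) j
    have hstep : resid U j i = ((A * A - A * P * A) *ᵥ δ) j := by
      rw [hres, hδ]
      simp [Matrix.mulVec_single]
    rw [hstep, Matrix.sub_mulVec, hr, Matrix.mulVec_sub]
    have e1 : (A * A) *ᵥ δ = A *ᵥ a := by rw [ha, Matrix.mulVec_mulVec]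
    have e2 : (A * P * A) *ᵥ δ = A *ᵥ (P *ᵥ a) := by
      rw [ha, Matrix.mulVec_mulVec, Matrix.mulVec_mulVec]
    rw [e1, e2]
  have hra : r ⬝ᵥ a = c := by
    have h1 : r ⬝ᵥ a = r ⬝ᵥ r + r ⬝ᵥ (P *ᵥ a) := by
      have hadd : a = r + P *ᵥ a := by
        funext k; rw [hr]; simp
      conv_lhs => rw [hadd]
      rw [dotProduct_add]
    have h2 : r ⬝ᵥ (P *ᵥ a) = 0 := by
      rw [dotProduct_mulVec, ← Matrix.mulVec_transpose, hPT, hPr]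
      simp
    rw [h1, h2, add_zero, hc]
  have hβi : β i = c := by
    have h0 : β i = (A *ᵥ r) ⬝ᵥ δ := by
      rw [hβv, hδ, dotProduct_single, mul_one]
    rw [h0, mulVec_dotProduct_eq, hAT, ← ha, hra]
  -- the inclusion matrix: Cm U = Cm U' * J
  have hiU' : i ∈ U' := by rw [hU']; exact Finset.mem_insert_self i U
  have hjmem : ∀ j : ↥U, (j : Fin p) ∈ U' := by
    intro j; rw [hU']; exact Finset.mem_insert_of_mem j.2
  obtain ⟨ιm, hιm⟩ : ∃ ιm : ↥U → ↥U',
      ιm = fun j : ↥U => (⟨(j : Fin p), hjmem j⟩ : ↥U') := ⟨_, rfl⟩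
  obtain ⟨J, hJ⟩ : ∃ J : Matrix ↥U' ↥U ℝ,
      J = (1 : Matrix ↥U' ↥U' ℝ).submatrix (Equiv.refl ↥U') ιm := ⟨_, rfl⟩
  have hCU : Cm U' * J = Cm U := by
    rw [hJ, Matrix.mul_submatrix_one, hCm, hιm]
    rfl
  have hPrange' : P = Cm U' * (J * X₀) := by rw [hX₀, ← Matrix.mul_assoc, hCU]
  -- criterion for Pq * Cm U' = Cm U'
  have colcrit : ∀ Pq : Matrix (Fin p) (Fin p) ℝ,
      (∀ j ∈ U', Pq *ᵥ (fun k => A k j) = fun k => A k j) → Pq * Cm U' = Cm U' := by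
    intro Pq h
    ext k j
    calc (Pq * Cm U') k j = (Pq *ᵥ (fun l => A l (j : Fin p))) k := by
          simp [hCm, Matrix.mul_apply, Matrix.mulVec, dotProduct]
      _ = A k (j : Fin p) := by rw [h _ j.2]
      _ = Cm U' k j := by simp [hCm]
  -- the i-th column of Cm U'
  obtain ⟨δ', hδ'⟩ : ∃ δ' : ↥U' → ℝ, δ' = Pi.single (⟨i, hiU'⟩ : ↥U') 1 := ⟨_, rfl⟩
  have haU' : Cm U' *ᵥ δ' = a := by
    funext k
    rw [hδ', Matrix.mulVec_single]
    simp [hCm, haf]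
  by_cases hrz : r = 0
  · -- degenerate case : the new column is already in the span
    have hPa : P *ᵥ a = a := by
      have h0 : a - P *ᵥ a = 0 := by rw [← hr, hrz]
      funext k
      have := congrFun h0 k
      simp only [Pi.sub_apply, Pi.zero_apply] at this
      linarith
    have hPU' : Pm U' = P := by
      refine proj_unique (C := Cm U') (hproj U').1 (hproj U').2.2.1 (hproj U').2.2.2
        hPT ?_ ⟨J * X₀, hPrange'⟩
      refine colcrit P fun j hj => ?_
      rw [hU'] at hj
      rcases Finset.mem_insert.mp hj with hji | hjU
      · subst hji
        rw [← haf]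
        exact hPa
      · exact hcolU j hjU
    have hβi0 : β i = 0 := by
      rw [hβi, hc, hrz]
      simp
    rw [if_neg (by rw [hβi0]; exact lt_irrefl 0), sub_zero, ← hU', hsub U', hsub U,
      hPU', hP]
  · -- main case : positive new residual variance
    have hcpos : 0 < c := by
      rw [hc]
      obtain ⟨j₀, hj₀⟩ := Function.ne_iff.mp hrz
      refine Finset.sum_pos' (fun j _ => mul_self_nonneg _) ⟨j₀, Finset.mem_univ _, ?_⟩
      exact mul_self_pos.mpr (by simpa using hj₀)
    obtain ⟨Q, hQ⟩ : ∃ Q : Matrix (Fin p) (Fin p) ℝ, Q = c⁻¹ • vecMulVec r r := ⟨_, rfl⟩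
    have hvvT : (vecMulVec r r)ᵀ = vecMulVec r r := by
      ext j k; simp [vecMulVec_apply, mul_comm]
    have hQT : Qᵀ = Q := by rw [hQ, Matrix.transpose_smul, hvvT]
    have hPQ : P * Q = 0 := by
      rw [hQ, Matrix.mul_smul, _root_.mul_vecMulVec, hPr]
      have hz : vecMulVec (0 : Fin p → ℝ) r = 0 := by ext j k; simp [vecMulVec_apply]
      rw [hz, smul_zero]
    have hQP : Q * P = 0 := by
      rw [hQ, Matrix.smul_mul, _root_.vecMulVec_mul, hPT, hPr]
      have hz : vecMulVec r (0 : Fin p → ℝ) = 0 := by ext j k; simp [vecMulVec_apply]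
      rw [hz, smul_zero]
    obtain ⟨Pn, hPn⟩ : ∃ Pn : Matrix (Fin p) (Fin p) ℝ, Pn = P + Q := ⟨_, rfl⟩
    have hQQ : Q * Q = Q := by
      rw [hQ, Matrix.mul_smul, Matrix.smul_mul, _root_.vecMulVec_mul, hvvT, _root_.vecMulVec_mulVec, ← hc]
      have hscal : vecMulVec r (c • r) = c • vecMulVec r r := by
        ext j k; simp [vecMulVec_apply]; ring
      rw [hscal, smul_smul, smul_smul, mul_assoc, inv_mul_cancel₀ (ne_of_gt hcpos), mul_one]
    have hPnT : Pnᵀ = Pn := by rw [hPn, Matrix.transpose_add, hPT, hQT]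
    have hPnP : Pn * Pn = Pn := by
      rw [hPn, Matrix.add_mul, Matrix.mul_add, Matrix.mul_add, hPP, hPQ, hQP, hQQ,
        add_zero, zero_add]
    have hrcol : ∀ j ∈ U, r ⬝ᵥ (fun k => A k j) = 0 := by
      intro j hj
      have hw := hcolU j hj
      have hstep : r ⬝ᵥ (fun k => A k j) = r ⬝ᵥ (P *ᵥ (fun k => A k j)) := by rw [hw]
      rw [hstep, dotProduct_mulVec, ← Matrix.mulVec_transpose, hPT, hPr,
        zero_dotProduct]
    have hQcol : ∀ j ∈ U, Q *ᵥ (fun k => A k j) = 0 := by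
      intro j hj
      rw [hQ, Matrix.smul_mulVec, _root_.vecMulVec_mulVec, hrcol j hj, zero_smul, smul_zero]
    have hPna : Pn *ᵥ a = a := by
      rw [hPn, Matrix.add_mulVec, hQ, Matrix.smul_mulVec, _root_.vecMulVec_mulVec, hra,
        smul_smul, inv_mul_cancel₀ (ne_of_gt hcpos), one_smul]
      funext k
      have := congrFun hr k
      simp only [Pi.sub_apply] at this
      simp only [Pi.add_apply, this]
      ring
    have hPnC' : Pn * Cm U' = Cm U' := by
      refine colcrit Pn fun j hj => ?_
      rw [hU'] at hj
      rcases Finset.mem_insert.mp hj with hji | hjU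
      · subst hji; rw [← haf]; exact hPna
      · rw [hPn, Matrix.add_mulVec, hcolU j hjU, hQcol j hjU, add_zero]
    obtain ⟨w, hwv⟩ : ∃ w : ↥U' → ℝ, r = Cm U' *ᵥ w := by
      refine ⟨δ' - (J * X₀) *ᵥ a, ?_⟩
      rw [Matrix.mulVec_sub, haU', Matrix.mulVec_mulVec, ← hPrange', hr]
    have hQrange : Q = Cm U' * (c⁻¹ • vecMulVec w r) := by
      rw [hQ, Matrix.mul_smul, _root_.mul_vecMulVec, ← hwv]
    have hPnrange : ∃ Y : Matrix ↥U' (Fin p) ℝ, Pn = Cm U' * Y :=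
      ⟨J * X₀ + c⁻¹ • vecMulVec w r, by rw [hPn, Matrix.mul_add, ← hPrange', ← hQrange]⟩
    have hPU' : Pm U' = Pn :=
      proj_unique (hproj U').1 (hproj U').2.2.1 (hproj U').2.2.2 hPnT hPnC' hPnrange
    have htr : Matrix.trace (A * Q * A) = (∑ j, β j ^ 2) / β i := by
      rw [hQ, Matrix.mul_smul, Matrix.smul_mul, _root_.mul_vecMulVec, _root_.vecMulVec_mul, hAT,
        Matrix.trace_smul, _root_.trace_vecMulVec, smul_eq_mul, hβi, hβv, div_eq_inv_mul]
      congr 1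
      simp [dotProduct, sq]
    rw [← hU', hsub U', hsub U, hPU', hPn, ← hP]
    rw [if_pos (by rw [hβi]; exact hcpos)]
    rw [Matrix.mul_add, Matrix.add_mul, ← htr]
    rw [Matrix.trace_sub, Matrix.trace_sub, Matrix.trace_add]
    ring
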